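/- Let λ ∈ ℂ, let (a(n)) be a sequence of complex numbers with a(n) = O(n^c) for some c > 0, and define f(z) = Σ_{n=1}^∞ a(n) n^λ e^{2πinz} for Im(z) > 0. If f extends to an entire function on ℂ, then a(n) n^λ = O(r^n) for every 0 < r < 1, hence a(n) = O(n^{-A}) for every A > 0. -/

import Mathlib

open Complex
open scoped Topology NNReal ENNReal

/-- Let `λ ∈ ℂ`, `(a(n))` with `a(n) = O(n^c)` for some `c > 0`, and
`f(z) = Σ_{n≥1} a(n) n^λ e^{2πinz}` on the upper half-plane. If `f` extends to
an entire function on `ℂ`, then `a(n) n^λ = O(rⁿ)` for every `0 < r < 1`,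
hence `a(n) = O(n^{-A})` for every `A > 0`. -/
theorem stmt_12 (lam : ℂ) (a : ℕ → ℂ) (c : ℝ) (hc : 0 < c)
    (ha : ∃ C : ℝ, ∀ n : ℕ, 1 ≤ n → ‖a n‖ ≤ C * (n : ℝ) ^ c)
    (hf : ∃ g : ℂ → ℂ, Differentiable ℂ g ∧
      ∀ z : ℂ, 0 < z.im →
        HasSum (fun n : ℕ => a (n + 1) * ((n + 1 : ℕ) : ℂ) ^ lam *
          Complex.exp (2 * Real.pi * Complex.I * ((n + 1 : ℕ) : ℂ) * z)) (g z)) :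
    (∀ r : ℝ, 0 < r → r < 1 →
      ∃ C : ℝ, ∀ n : ℕ, 1 ≤ n → ‖a n * (n : ℂ) ^ lam‖ ≤ C * r ^ n) ∧
    (∀ A : ℝ, 0 < A → ∃ C : ℝ, ∀ n : ℕ, 1 ≤ n → ‖a n‖ ≤ C * (n : ℝ) ^ (-A)) := by
  obtain ⟨C₀, hC₀⟩ := ha
  obtain ⟨g, hg, hsum⟩ := hf
  set b : ℕ → ℂ := fun n => if n = 0 then 0 else a n * (n : ℂ) ^ lam with hb_def
  -- rewrite of the exponential as q-power
  have hexp : ∀ (z : ℂ) (n : ℕ),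
      Complex.exp (2 * Real.pi * Complex.I * ((n + 1 : ℕ) : ℂ) * z)
        = (Function.Periodic.qParam 1 z) ^ (n + 1) := by
    intro z n
    rw [Function.Periodic.qParam]
    rw [show (2 * (Real.pi:ℂ) * Complex.I * ((n+1:ℕ):ℂ) * z)
        = ((n+1:ℕ):ℂ) * (2 * Real.pi * Complex.I * z / ((1:ℝ):ℂ)) by push_cast; ring]
    rw [Complex.exp_nat_mul]
  have hnormexp : ∀ (m : ℕ) (z : ℂ), ‖Complex.exp (2 * Real.pi * Complex.I * (m:ℂ) * z)‖
      = Real.exp (-(2 * Real.pi * m * z.im)) := by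
    intro m z
    rw [Complex.norm_exp]
    congr 1
    simp [mul_re, mul_im]
  -- polynomial bound on b
  set k : ℕ := ⌈c + |lam.re|⌉₊ with hk_def
  set C₁ : ℝ := max C₀ 0 with hC₁_def
  have hC₁0 : 0 ≤ C₁ := le_max_right _ _
  have hbn : ∀ n : ℕ, 1 ≤ n → b n = a n * (n : ℂ) ^ lam := by
    intro n hn; simp only [hb_def]; rw [if_neg (by omega)]
  have hbb : ∀ n : ℕ, 1 ≤ n → ‖b n‖ ≤ C₁ * (n:ℝ) ^ k := by
    intro n hn
    have hn0 : (0:ℝ) < n := by exact_mod_cast hn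
    have hn1 : (1:ℝ) ≤ n := by exact_mod_cast hn
    rw [hbn n hn, norm_mul, Complex.norm_natCast_cpow_of_pos (by omega)]
    have h1 : ‖a n‖ ≤ C₁ * (n:ℝ)^c := le_trans (hC₀ n hn)
      (mul_le_mul_of_nonneg_right (le_max_left _ _) (Real.rpow_nonneg hn0.le c))
    calc ‖a n‖ * (n:ℝ)^lam.re ≤ (C₁ * (n:ℝ)^c) * (n:ℝ)^lam.re :=
          mul_le_mul_of_nonneg_right h1 (Real.rpow_nonneg hn0.le _)
      _ = C₁ * (n:ℝ)^(c + lam.re) := by rw [Real.rpow_add hn0]; ring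
      _ ≤ C₁ * (n:ℝ)^((k:ℝ)) := by
          gcongr
          · refine le_trans ?_ (Nat.le_ceil _)
            have := neg_abs_le lam.re
            linarith [le_abs_self lam.re]
      _ = C₁ * (n:ℝ)^k := by rw [Real.rpow_natCast]
  -- periodicity of g
  have hUopen : IsOpen {z : ℂ | 0 < z.im} := isOpen_lt continuous_const Complex.continuous_im
  have hterm_eq : ∀ (z : ℂ) (n : ℕ),
      a (n + 1) * ((n + 1 : ℕ) : ℂ) ^ lam *
          Complex.exp (2 * Real.pi * Complex.I * ((n + 1 : ℕ) : ℂ) * (z + 1))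
        = a (n + 1) * ((n + 1 : ℕ) : ℂ) ^ lam *
          Complex.exp (2 * Real.pi * Complex.I * ((n + 1 : ℕ) : ℂ) * z) := by
    intro z n
    congr 1
    rw [mul_add, mul_one, Complex.exp_add]
    have h1 : Complex.exp (2 * Real.pi * Complex.I * ((n+1:ℕ):ℂ)) = 1 := by
      have h := Complex.exp_int_mul_two_pi_mul_I ((n:ℤ)+1)
      rw [show ((((n:ℤ)+1 : ℤ)):ℂ) * (2 * Real.pi * Complex.I)
          = 2 * Real.pi * Complex.I * ((n+1:ℕ):ℂ) by push_cast; ring] at h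
      exact h
    rw [h1, mul_one]
  have hper : Function.Periodic g 1 := by
    have h1 : Set.EqOn (fun z => g (z + 1)) g {z : ℂ | 0 < z.im} := by
      intro z hz
      have h2 := hsum (z + 1) (by simpa using hz)
      simp only [hterm_eq z] at h2
      exact h2.unique (hsum z hz)
    have hg1 : Differentiable ℂ (fun z : ℂ => g (z + 1)) :=
      hg.comp (differentiable_id.add_const 1)
    have heq := AnalyticOnNhd.eq_of_eventuallyEq
      (analyticOnNhd_univ_iff_differentiable.mpr hg1)
      (analyticOnNhd_univ_iff_differentiable.mpr hg)
      (Filter.eventuallyEq_of_mem (hUopen.mem_nhds (by simp [Complex.I_im] : Complex.I ∈ {z : ℂ | 0 < z.im})) h1)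
    intro z
    exact congrFun heq z
  -- decay of g at I∞
  set r₀ : ℝ := Real.exp (-Real.pi) with hr₀_def
  have hr₀pos : 0 < r₀ := Real.exp_pos _
  have hr₀ : ‖r₀‖ < 1 := by
    rw [Real.norm_eq_abs, abs_of_pos hr₀pos]
    exact Real.exp_lt_one_iff.mpr (by linarith [Real.pi_pos])
  have hsumu : Summable (fun n : ℕ => C₁ * (((n:ℝ)+1)^k * r₀^(n+1))) := by
    apply Summable.mul_left
    have := (summable_nat_add_iff (f := fun m : ℕ => (m:ℝ)^k * r₀^m) 1).mpr
      (summable_pow_mul_geometric_of_norm_lt_one k hr₀)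
    refine this.congr fun n => by push_cast; ring
  set S : ℝ := ∑' n : ℕ, C₁ * (((n:ℝ)+1)^k * r₀^(n+1)) with hS_def
  have hgbound : ∀ z : ℂ, 1 ≤ z.im → ‖g z‖ ≤ S * Real.exp (-Real.pi * z.im) := by
    intro z hz1
    have hz0 : 0 < z.im := lt_of_lt_of_le one_pos hz1
    have h3 := hsum z hz0
    refine h3.norm_le_of_bounded (hsumu.hasSum.mul_right (Real.exp (-Real.pi * z.im))) ?_
    intro n
    have e1 : ‖a (n+1) * ((n+1:ℕ):ℂ)^lam‖ = ‖b (n+1)‖ := by rw [hbn (n+1) (by omega)]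
    rw [norm_mul, e1, hnormexp (n+1)]
    have e2 : Real.exp (-(2 * Real.pi * (n+1) * z.im)) ≤ r₀^(n+1) * Real.exp (-Real.pi * z.im) := by
      rw [hr₀_def, ← Real.exp_nat_mul, ← Real.exp_add]
      apply Real.exp_le_exp.mpr
      have hpi := Real.pi_pos
      have hn1 : (1:ℝ) ≤ (n:ℝ)+1 := by have := Nat.cast_nonneg (α := ℝ) n; linarith
      have key : ((n:ℝ)+1) + z.im ≤ 2*((n:ℝ)+1)*z.im := by
        nlinarith [mul_nonneg (sub_nonneg.mpr hn1) (sub_nonneg.mpr hz1),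
          mul_le_mul hn1 hz1 one_pos.le (by positivity : (0:ℝ) ≤ (n:ℝ)+1)]
      push_cast
      nlinarith [mul_le_mul_of_nonneg_left key hpi.le]
    calc ‖b (n+1)‖ * Real.exp (-(2 * Real.pi * ((n+1:ℕ):ℝ) * z.im))
        ≤ (C₁ * ((n:ℝ)+1)^k) * (r₀^(n+1) * Real.exp (-Real.pi * z.im)) := by
          push_cast
          exact mul_le_mul (by have := hbb (n+1) (by omega); push_cast at this ⊢; exact this)
            e2 (Real.exp_pos _).le (by positivity)
      _ = C₁ * (((n:ℝ)+1)^k * r₀^(n+1)) * Real.exp (-Real.pi * z.im) := by ring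
  have hzero : Filter.ZeroAtFilter (Filter.comap Complex.im Filter.atTop) g := by
    rw [Filter.ZeroAtFilter, tendsto_zero_iff_norm_tendsto_zero]
    have hev : ∀ᶠ z in Filter.comap Complex.im Filter.atTop,
        ‖g z‖ ≤ S * Real.exp (-Real.pi * z.im) := by
      filter_upwards [Filter.preimage_mem_comap (Filter.eventually_ge_atTop 1)] with z hz
      exact hgbound z hz
    have hlim : Filter.Tendsto (fun z : ℂ => S * Real.exp (-Real.pi * z.im))
        (Filter.comap Complex.im Filter.atTop) (𝓝 0) := by
      rw [show (0:ℝ) = S * 0 by ring]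
      apply Filter.Tendsto.const_mul
      apply Real.tendsto_exp_atBot.comp
      exact (Filter.tendsto_comap).const_mul_atTop_of_neg (by linarith [Real.pi_pos] : -Real.pi < 0)
    exact squeeze_zero' (Filter.Eventually.of_forall fun z => norm_nonneg _) hev hlim
  -- the cusp function
  set F : ℂ → ℂ := Function.Periodic.cuspFunction 1 g with hF_def
  have hF0 : F 0 = 0 := Function.Periodic.cuspFunction_zero_of_zero_at_inf one_pos hzero
  have hFdiff : Differentiable ℂ F := by
    intro q
    rcases eq_or_ne q 0 with rfl | hq
    · exact Function.Periodic.differentiableAt_cuspFunction_zero one_pos hper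
        (Filter.Eventually.of_forall fun z => hg z) hzero.boundedAtFilter
    · rw [hF_def, ← Function.Periodic.qParam_right_inv one_ne_zero hq]
      exact Function.Periodic.differentiableAt_cuspFunction one_ne_zero hper (hg _)
  -- power series expansion of F on the unit ball
  have hFsum : ∀ q : ℂ, ‖q‖ < 1 → HasSum (fun n : ℕ => b n * q ^ n) (F q) := by
    intro q hq
    rcases eq_or_ne q 0 with rfl | hq0
    · rw [hF0]
      have : (fun n : ℕ => b n * (0:ℂ) ^ n) = fun _ => 0 := by
        funext n
        rcases Nat.eq_zero_or_pos n with rfl | hn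
        · simp [hb_def]
        · rw [zero_pow (by omega), mul_zero]
      rw [this]
      exact hasSum_zero
    · set z : ℂ := Function.Periodic.invQParam 1 q with hz_def
      have him : 0 < z.im :=
        Function.Periodic.im_invQParam_pos_of_norm_lt_one one_pos
          hq hq0
      have hqz : Function.Periodic.qParam 1 z = q :=
        Function.Periodic.qParam_right_inv one_ne_zero hq0
      have h2 := hsum z him
      have h3 : (fun n : ℕ => a (n + 1) * ((n + 1 : ℕ) : ℂ) ^ lam *
          Complex.exp (2 * Real.pi * Complex.I * ((n + 1 : ℕ) : ℂ) * z))
          = fun n : ℕ => b (n+1) * q ^ (n+1) := by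
        funext n
        rw [hexp z n, hqz, hbn (n+1) (by omega)]
      rw [h3] at h2
      have hFq : F q = g z := Function.Periodic.cuspFunction_eq_of_nonzero 1 g hq0
      rw [hFq]
      have := (hasSum_nat_add_iff (f := fun n : ℕ => b n * q ^ n) 1).mp h2
      simpa [hb_def] using this
  -- the formal power series
  set p : FormalMultilinearSeries ℂ ℂ ℂ := FormalMultilinearSeries.ofScalars ℂ b with hp_def
  have hpnorm : ∀ n, ‖p n‖ = ‖b n‖ := fun n => FormalMultilinearSeries.ofScalars_norm ℂ b n
  -- radius at least 1/2
  obtain ⟨M, hM⟩ : ∃ M : ℝ, ∀ n : ℕ, (n:ℝ)^k * (1/2:ℝ)^n ≤ M := by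
    obtain ⟨M, hM⟩ := (tendsto_pow_const_mul_const_pow_of_lt_one k
      (by norm_num : (0:ℝ) ≤ 1/2) (by norm_num)).bddAbove_range
    exact ⟨M, fun n => hM ⟨n, rfl⟩⟩
  have hM0 : 0 ≤ M := le_trans (by positivity) (hM 1)
  have hrad2 : (1/2 : ℝ≥0∞) ≤ p.radius := by
    rw [show (1/2 : ℝ≥0∞) = ((1/2 : ℝ≥0) : ℝ≥0∞) by norm_num]
    apply p.le_radius_of_bound (C₁ * M + 1)
    intro n
    rw [hpnorm]
    have hco : ((1/2 : ℝ≥0) : ℝ) = 1/2 := by norm_num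
    rw [hco]
    rcases Nat.eq_zero_or_pos n with rfl | hn
    · simp only [hb_def, if_pos rfl, norm_zero, pow_zero, zero_mul]
      linarith [mul_nonneg hC₁0 hM0]
    · have h1 : ‖b n‖ * (1/2:ℝ)^n ≤ (C₁ * (n:ℝ)^k) * (1/2:ℝ)^n :=
        mul_le_mul_of_nonneg_right (hbb n hn) (by positivity)
      refine le_trans h1 ?_
      nlinarith [mul_le_mul_of_nonneg_left (hM n) hC₁0]
  have hFps : HasFPowerSeriesOnBall F p 0 (1/2) := by
    refine ⟨hrad2, by norm_num, ?_⟩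
    intro y hy
    have hy1 : ‖y‖ < 1 := by
      rw [EMetric.mem_ball, edist_zero_right] at hy
      have h2 : (‖y‖₊ : ℝ≥0∞) < 1 := lt_trans hy (by norm_num)
      have h3 : ‖y‖₊ < 1 := by exact_mod_cast h2
      exact_mod_cast h3
    have := hFsum y hy1
    rw [zero_add]
    refine this.congr_fun fun n => ?_
    rw [hp_def, FormalMultilinearSeries.ofScalars_apply_eq]
    simp [smul_eq_mul, mul_comm]
  -- F is entire, so p has infinite radius
  have hcauchy := hFdiff.hasFPowerSeriesOnBall (R := 1) (z := 0) one_pos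
  have hpeq : p = cauchyPowerSeries F 0 1 :=
    hFps.hasFPowerSeriesAt.eq_formalMultilinearSeries hcauchy.hasFPowerSeriesAt
  have hradtop : p.radius = ⊤ := by
    rw [hpeq]
    exact top_unique hcauchy.r_le
  -- Part 1
  have P1 : ∀ r : ℝ, 0 < r → r < 1 →
      ∃ C : ℝ, 0 ≤ C ∧ ∀ n : ℕ, 1 ≤ n → ‖a n * (n : ℂ) ^ lam‖ ≤ C * r ^ n := by
    intro r hr0 _
    set s : ℝ≥0 := ⟨r⁻¹, (inv_nonneg.mpr hr0.le)⟩ with hs_def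
    obtain ⟨Cb, hCb0, hCb⟩ := p.norm_mul_pow_le_of_lt_radius
      (by rw [hradtop]; exact ENNReal.coe_lt_top : (s : ENNReal) < p.radius)
    refine ⟨Cb, hCb0.le, fun n hn => ?_⟩
    have h1 := hCb n
    rw [hpnorm, ← hbn n hn] at *
    have hs : (s : ℝ) = r⁻¹ := rfl
    rw [hs] at h1
    have h2 : ‖b n‖ * r⁻¹^n * r^n ≤ Cb * r^n :=
      mul_le_mul_of_nonneg_right h1 (pow_nonneg hr0.le n)
    calc ‖b n‖ = ‖b n‖ * r⁻¹^n * r^n := by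
          rw [mul_assoc, ← mul_pow, inv_mul_cancel₀ hr0.ne', one_pow, mul_one]
      _ ≤ Cb * r^n := h2
  constructor
  · intro r hr0 hr1
    obtain ⟨C, _, hC⟩ := P1 r hr0 hr1
    exact ⟨C, hC⟩
  -- Part 2
  · intro A hA
    obtain ⟨C₂, hC₂0, hC₂⟩ := P1 (1/2) (by norm_num) (by norm_num)
    set m : ℕ := ⌈|A - lam.re|⌉₊ with hm_def
    obtain ⟨M₂, hM₂⟩ : ∃ M : ℝ, ∀ n : ℕ, (n:ℝ)^m * (1/2:ℝ)^n ≤ M := by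
      obtain ⟨M, hM⟩ := (tendsto_pow_const_mul_const_pow_of_lt_one m
        (by norm_num : (0:ℝ) ≤ 1/2) (by norm_num)).bddAbove_range
      exact ⟨M, fun n => hM ⟨n, rfl⟩⟩
    refine ⟨C₂ * M₂, fun n hn => ?_⟩
    have hn0 : (0:ℝ) < n := by exact_mod_cast hn
    have hn1 : (1:ℝ) ≤ n := by exact_mod_cast hn
    have hnlam : ‖(n:ℂ) ^ lam‖ = (n:ℝ) ^ lam.re := Complex.norm_natCast_cpow_of_pos (by omega) _
    have ha_eq : ‖a n‖ = ‖a n * (n:ℂ)^lam‖ * (n:ℝ)^(-lam.re) := by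
      rw [norm_mul, hnlam, Real.rpow_neg hn0.le, mul_assoc,
        mul_inv_cancel₀ (ne_of_gt (Real.rpow_pos_of_pos hn0 _)), mul_one]
    rw [ha_eq]
    have hstep : (n:ℝ)^(-lam.re) = (n:ℝ)^(A - lam.re) * (n:ℝ)^(-A) := by
      rw [← Real.rpow_add hn0]; ring_nf
    have hpow : (n:ℝ)^(A - lam.re) ≤ (n:ℝ)^m := by
      rw [← Real.rpow_natCast (n:ℝ) m]
      apply Real.rpow_le_rpow_of_exponent_le hn1
      exact le_trans (le_abs_self _) (Nat.le_ceil _)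
    calc ‖a n * (n:ℂ)^lam‖ * (n:ℝ)^(-lam.re)
        = ‖a n * (n:ℂ)^lam‖ * (n:ℝ)^(A - lam.re) * (n:ℝ)^(-A) := by rw [hstep]; ring
      _ ≤ (C₂ * (1/2:ℝ)^n) * (n:ℝ)^m * (n:ℝ)^(-A) :=
          mul_le_mul_of_nonneg_right
            (mul_le_mul (hC₂ n hn) hpow (Real.rpow_nonneg hn0.le _)
              (mul_nonneg hC₂0 (by positivity)))
            (Real.rpow_nonneg hn0.le _)
      _ = C₂ * ((n:ℝ)^m * (1/2:ℝ)^n) * (n:ℝ)^(-A) := by ring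
      _ ≤ C₂ * M₂ * (n:ℝ)^(-A) :=
          mul_le_mul_of_nonneg_right (mul_le_mul_of_nonneg_left (hM₂ n) hC₂0)
            (Real.rpow_nonneg hn0.le _)
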